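/- Let X be a finite alphabet, F a set of words over X each of length at least 1, k a field, and A = k⟨X⟩/I(F) the associated monomial algebra. Then the images in A of the legal words (the words having no element of F as a contiguous factor) form a k-vector space basis of A. -/

import Mathlib

/-- A word is *legal* (with respect to the set of forbidden words `F`) if no element of `F`
is a contiguous factor of it. -/
def MonomialLegal {X : Type*} (F : Set (FreeMonoid X)) (w : FreeMonoid X) : Prop :=
  ∀ f ∈ F, ∀ u v : FreeMonoid X, w ≠ u * f * v

/-- The defining relation of the monomial algebra `A = k⟨X⟩/I(F)`: each forbidden word is
identified with `0`, so that `RingQuot` of this relation is the quotient of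
`k⟨X⟩ = MonoidAlgebra k (FreeMonoid X)` by the two-sided ideal generated by the words of `F`. -/
def monomialRel (k X : Type*) [Field k] (F : Set (FreeMonoid X)) :
    MonoidAlgebra k (FreeMonoid X) → MonoidAlgebra k (FreeMonoid X) → Prop :=
  fun a b => b = 0 ∧ ∃ f ∈ F, a = MonoidAlgebra.of k (FreeMonoid X) f

open scoped Classical

section Aux
variable {k X : Type*} [Field k] (F : Set (FreeMonoid X))

lemma legal_one (hF : ∀ f ∈ F, 1 ≤ FreeMonoid.length f) : MonomialLegal F (1 : FreeMonoid X) := by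
  intro f hf u v h
  have := hF f hf
  have hlen : FreeMonoid.length (1 : FreeMonoid X) = FreeMonoid.length (u * f * v) := by rw [h]
  simp [FreeMonoid.length_mul] at hlen
  omega

lemma illegal_mul_left {w : FreeMonoid X} (a : FreeMonoid X) (h : ¬ MonomialLegal F w) :
    ¬ MonomialLegal F (a * w) := by
  simp only [MonomialLegal, not_forall, not_not, ne_eq] at h ⊢
  obtain ⟨f, hf, u, v, hw⟩ := h
  exact ⟨f, hf, a * u, v, by rw [hw, mul_assoc, mul_assoc, mul_assoc]⟩

lemma illegal_of_mem {f : FreeMonoid X} (hf : f ∈ F) (w : FreeMonoid X) :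
    ¬ MonomialLegal F (f * w) := by
  intro h
  exact h f hf 1 w (by simp)

abbrev LegalV (k : Type*) [Field k] (F : Set (FreeMonoid X)) :=
  {w : FreeMonoid X // MonomialLegal F w} →₀ k

noncomputable def letterAct (x : X) : Module.End k (LegalV k F) :=
  Finsupp.lsum k (fun w => if h : MonomialLegal F (FreeMonoid.of x * w.1) then
    Finsupp.lsingle ⟨FreeMonoid.of x * w.1, h⟩ else 0)

lemma letterAct_single (x : X) (w : {w : FreeMonoid X // MonomialLegal F w}) (c : k) :
    letterAct F x (Finsupp.single w c) =
      if h : MonomialLegal F (FreeMonoid.of x * w.1) then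
        Finsupp.single ⟨FreeMonoid.of x * w.1, h⟩ c else 0 := by
  rw [letterAct, Finsupp.lsum_single]
  split <;> simp

lemma wordAct_single (u : FreeMonoid X) (w : {w : FreeMonoid X // MonomialLegal F w}) (c : k) :
    FreeMonoid.lift (letterAct (k := k) F) u (Finsupp.single w c) =
      if h : MonomialLegal F (u * w.1) then Finsupp.single ⟨u * w.1, h⟩ c else 0 := by
  induction u using FreeMonoid.recOn with
  | one => simp [w.2]
  | of_mul x xs ih =>
      rw [map_mul]
      have : (FreeMonoid.lift (letterAct (k := k) F) (FreeMonoid.of x) *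
          FreeMonoid.lift (letterAct (k := k) F) xs) (Finsupp.single w c) =
          FreeMonoid.lift (letterAct (k := k) F) (FreeMonoid.of x)
            (FreeMonoid.lift (letterAct (k := k) F) xs (Finsupp.single w c)) := rfl
      rw [this, ih, FreeMonoid.lift_eval_of]
      by_cases h : MonomialLegal F (xs * w.1)
      · rw [dif_pos h, letterAct_single]
        by_cases h2 : MonomialLegal F (FreeMonoid.of x * (xs * w.1))
        · rw [dif_pos h2, dif_pos (by rwa [mul_assoc])]
          congr 1
        · rw [dif_neg h2, dif_neg (by rwa [mul_assoc])]
      · rw [dif_neg h, map_zero, dif_neg (by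
          rw [mul_assoc]; exact illegal_mul_left F _ h)]

end Aux


/-- The images in the monomial algebra `A = k⟨X⟩/I(F)` of the legal words form a
`k`-vector space basis of `A`. -/
theorem exists_basis_of_legal_words
    (k X : Type*) [Field k] [Fintype X] (F : Set (FreeMonoid X))
    (hF : ∀ f ∈ F, 1 ≤ FreeMonoid.length f) :
    ∃ b : Module.Basis {w : FreeMonoid X // MonomialLegal F w} k
        (RingQuot (monomialRel k X F)),
      ∀ w : {w : FreeMonoid X // MonomialLegal F w},
        b w = RingQuot.mkAlgHom k (monomialRel k X F)
          (MonoidAlgebra.of k (FreeMonoid X) w.1) := by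
  classical
  set r := monomialRel k X F
  set mk := RingQuot.mkAlgHom k r
  -- the algebra morphism Φ : k⟨X⟩ → End(V)
  set Φ : MonoidAlgebra k (FreeMonoid X) →ₐ[k] Module.End k (LegalV k F) :=
    MonoidAlgebra.lift k (Module.End k (LegalV k F)) (FreeMonoid X)
      (FreeMonoid.lift (letterAct F)) with hΦ
  have hΦ0 : ∀ f ∈ F, Φ (MonoidAlgebra.of k (FreeMonoid X) f) = 0 := by
    intro f hf
    rw [hΦ, MonoidAlgebra.lift_of]
    apply Finsupp.lhom_ext
    intro w c
    rw [wordAct_single, dif_neg (illegal_of_mem F hf w.1)]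
    simp
  have hrel : ∀ a b, r a b → Φ a = Φ b := by
    rintro a b ⟨rfl, f, hf, rfl⟩
    rw [hΦ0 f hf, map_zero]
  set Ψ : RingQuot r →ₐ[k] Module.End k (LegalV k F) :=
    RingQuot.liftAlgHom k ⟨Φ, hrel⟩ with hΨ
  have hΨmk : ∀ a, Ψ (mk a) = Φ a := fun a =>
    RingQuot.liftAlgHom_mkAlgHom_apply k Φ hrel a
  set e : LegalV k F := Finsupp.single ⟨1, legal_one F hF⟩ 1 with he
  set E : RingQuot r →ₗ[k] LegalV k F :=
    { toFun := fun a => Ψ a e,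
      map_add' := fun a b => by show Ψ (a + b) e = Ψ a e + Ψ b e; rw [map_add]; rfl,
      map_smul' := fun c a => by show Ψ (c • a) e = c • Ψ a e; rw [map_smul, LinearMap.smul_apply] } with hE
  set b' : {w : FreeMonoid X // MonomialLegal F w} → RingQuot r :=
    fun w => mk (MonoidAlgebra.of k (FreeMonoid X) w.1) with hb'
  have hEb' : ∀ w, E (b' w) = Finsupp.single w 1 := by
    intro w
    show Ψ (b' w) e = _
    rw [hb', hΨmk, hΦ, MonoidAlgebra.lift_of, he]
    show FreeMonoid.lift (letterAct (k := k) F) w.1 (Finsupp.single _ 1) = _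
    rw [wordAct_single, dif_pos (by simpa using w.2)]
    congr 1
    exact Subtype.ext (mul_one _)
  -- linear independence
  have hli : LinearIndependent k b' := by
    apply LinearIndependent.of_comp E
    have : E ∘ b' = fun w => Finsupp.single w 1 := funext hEb'
    rw [this]
    have := (Finsupp.basisSingleOne (ι := {w : FreeMonoid X // MonomialLegal F w})
      (R := k)).linearIndependent
    rwa [Finsupp.coe_basisSingleOne] at this
  -- spanning
  have hmk0 : ∀ w : FreeMonoid X, ¬ MonomialLegal F w →
      mk (MonoidAlgebra.of k (FreeMonoid X) w) = 0 := by
    intro w hw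
    simp only [MonomialLegal, not_forall, not_not, ne_eq] at hw
    obtain ⟨f, hf, u, v, hweq⟩ := hw
    rw [hweq, map_mul, map_mul, map_mul, map_mul]
    have : mk (MonoidAlgebra.of k (FreeMonoid X) f) = 0 := by
      have := RingQuot.mkAlgHom_rel k (s := r) (⟨rfl, f, hf, rfl⟩ :
        r (MonoidAlgebra.of k (FreeMonoid X) f) 0)
      simpa using this
    rw [this, mul_zero, zero_mul]
  have hspan : ⊤ ≤ Submodule.span k (Set.range b') := by
    rintro a -
    obtain ⟨y, rfl⟩ := RingQuot.mkAlgHom_surjective k r a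
    induction y using MonoidAlgebra.induction with
    | zero => simp
    | single_add w c y _ _ ih =>
        rw [map_add]
        apply Submodule.add_mem _ _ ih
        have hsc : (MonoidAlgebra.single w c : MonoidAlgebra k (FreeMonoid X)) =
            c • MonoidAlgebra.of k (FreeMonoid X) w := by
          simp [MonoidAlgebra.of_apply, MonoidAlgebra.smul_single']
        rw [hsc, map_smul]
        apply Submodule.smul_mem
        by_cases hw : MonomialLegal F w
        · exact Submodule.subset_span ⟨⟨w, hw⟩, rfl⟩
        · rw [hmk0 w hw]
          exact Submodule.zero_mem _
  refine ⟨Module.Basis.mk hli hspan, fun w => ?_⟩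
  rw [Module.Basis.mk_apply]
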